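/- arXiv:0810.0427 — 2 statements merged into one kernel-verified Lean document; each statement's English description precedes it below -/
import Mathlib

section
/- Let P = (p_1,...,p_n) be a parking function of length n and let c ∈ {1,...,n} be a car. Then c is critical for P if and only if c is a right-to-left maximum in PA(P)^{−1}; that is, immediately after car c is parked there is no empty space among the spaces strictly to the right of q_c within {1,...,n} if and only if every car parked in a space strictly greater than q_c has a car number smaller than c. -/
/-!  Parking functions and the parking algorithm. -/

/-- Parking algorithm: cars `0, 1, ..., n-1` (in Lean's 0-based indexing of `Fin n`,
representing cars `1, ..., n`) arrive in order; car `i` drives to its favorite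
(1-indexed) space `p i` and parks in the first space `s ≥ p i` not occupied by an
earlier car.  `PA p i` is the space where car `i` actually parks. -/
noncomputable def PA {n : ℕ} (p : Fin n → ℕ) (i : Fin n) : ℕ :=
  sInf {s : ℕ | p i ≤ s ∧ ∀ j : Fin n, j < i → PA p j ≠ s}
termination_by i.val
decreasing_by exact ‹_ < _›

/-- `p` is a parking function of length `n`: every favorite space is in `{1, ..., n}`
and every car ends up parked in a space `≤ n`. -/
def IsParkingFunction {n : ℕ} (p : Fin n → ℕ) : Prop :=
  (∀ i, 1 ≤ p i ∧ p i ≤ n) ∧ ∀ i, PA p i ≤ n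

/-- The set (type) `PF_n` of parking functions of length `n`. -/
def ParkingFunction (n : ℕ) : Type :=
  {p : Fin n → ℕ // IsParkingFunction p}

instance {n : ℕ} : Finite (ParkingFunction n) := by
  apply Finite.of_injective
    (fun P : ParkingFunction n => fun i => (⟨P.1 i, Nat.lt_succ_of_le (P.2.1 i).2⟩ : Fin (n+1)))
  intro P Q h
  apply Subtype.ext; funext i
  simpa [Fin.mk.injEq] using congrFun h i

noncomputable instance {n : ℕ} : Fintype (ParkingFunction n) := Fintype.ofFinite _

/-- `jumpAt p c` is the number of jumps of car `c`, i.e. `q_c - p_c`. -/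
noncomputable def jumpAt {n : ℕ} (p : Fin n → ℕ) (c : Fin n) : ℕ := PA p c - p c

/-- `jump p` is the total number of jumps. -/
noncomputable def jump {n : ℕ} (p : Fin n → ℕ) : ℕ := ∑ c, jumpAt p c

/-- `luckyCount p k` is the number of cars `c` with `jump(p : c) = k`. -/
noncomputable def luckyCount {n : ℕ} (p : Fin n → ℕ) (k : ℕ) : ℕ :=
  Set.ncard {c : Fin n | jumpAt p c = k}

/-- `lucky p` is the number of lucky cars, i.e. cars with no jumps. -/
noncomputable def lucky {n : ℕ} (p : Fin n → ℕ) : ℕ :=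
  Set.ncard {c : Fin n | jumpAt p c = 0}

/-- Car `c` is critical: immediately after car `c` is parked, there is no empty space
among the spaces strictly to the right of its space `q_c` within `{1, ..., n}`. -/
def IsCritical {n : ℕ} (p : Fin n → ℕ) (c : Fin n) : Prop :=
  ∀ s : ℕ, PA p c < s → s ≤ n → ∃ j : Fin n, j ≤ c ∧ PA p j = s

/-- `critic p` is the number of critical cars. -/
noncomputable def critic {n : ℕ} (p : Fin n → ℕ) : ℕ :=
  Set.ncard {c : Fin n | IsCritical p c}

/-!  Rooted labeled forests, encoded by their parent function. -/

/-- A parent function `par : Fin n → Option (Fin n)` (where `par v = none` means that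
`v` is a root) encodes a rooted labeled forest on `n` vertices iff it has no cycles. -/
def IsForest {n : ℕ} (par : Fin n → Option (Fin n)) : Prop :=
  ∀ v : Fin n, ¬ Relation.TransGen (fun a b => par a = some b) v v

/-- The set (type) `F_n` of rooted labeled forests on `n` vertices. -/
def Forest (n : ℕ) : Type := {par : Fin n → Option (Fin n) // IsForest par}

instance {n : ℕ} : Finite (Forest n) := Subtype.finite
noncomputable instance {n : ℕ} : Fintype (Forest n) := Fintype.ofFinite _

/-- `x` is a descendant of `v`: `v` lies on the (unique) path from the root of `x`'s
component to `x`, i.e. the ancestor chain of `x` reaches `v`. -/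
def Descendant {n : ℕ} (par : Fin n → Option (Fin n)) (v x : Fin n) : Prop :=
  Relation.ReflTransGen (fun a b => par a = some b) x v

/-- `forestInvAt F v = inv(F : v)`, the number of pairs `(v, x)` with `v > x` and
`x` a descendant of `v`. -/
noncomputable def forestInvAt {n : ℕ} (F : Forest n) (v : Fin n) : ℕ :=
  Set.ncard {x : Fin n | x < v ∧ Descendant F.1 v x}

/-- `forestInv F = inv(F)`, the total number of inversions of `F`. -/
noncomputable def forestInv {n : ℕ} (F : Forest n) : ℕ := ∑ v, forestInvAt F v

/-- `forestLeadCount F k` is the number of vertices `v` with `inv(F : v) = k`. -/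
noncomputable def forestLeadCount {n : ℕ} (F : Forest n) (k : ℕ) : ℕ :=
  Set.ncard {v : Fin n | forestInvAt F v = k}

/-- `forestLead F = lead(F)`, the number of leaders of `F`. -/
noncomputable def forestLead {n : ℕ} (F : Forest n) : ℕ :=
  Set.ncard {v : Fin n | forestInvAt F v = 0}

/-- `forestTree F = tree(F)`, the number of trees (connected components) of `F`,
i.e. the number of roots. -/
noncomputable def forestTree {n : ℕ} (F : Forest n) : ℕ :=
  Set.ncard {v : Fin n | F.1 v = none}


lemma PA_mem {n : ℕ} (p : Fin n → ℕ) (i : Fin n) :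
    p i ≤ PA p i ∧ ∀ j : Fin n, j < i → PA p j ≠ PA p i := by
  have h : PA p i ∈ {s : ℕ | p i ≤ s ∧ ∀ j : Fin n, j < i → PA p j ≠ s} := by
    rw [PA]
    exact Nat.sInf_mem ⟨Finset.univ.sup (fun j : Fin n => PA p j) + p i + 1,
      ⟨by omega, fun j hj h => by
        have h2 : PA p j ≤ Finset.univ.sup (fun k : Fin n => PA p k) :=
          Finset.le_sup (f := fun k : Fin n => PA p k) (Finset.mem_univ j); omega⟩⟩
  exact h

lemma PA_inj {n : ℕ} (p : Fin n → ℕ) : Function.Injective (PA p) := by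
  intro i j h
  by_contra hne
  rcases lt_or_gt_of_ne hne with hlt | hlt
  · exact (PA_mem p j).2 i hlt h
  · exact (PA_mem p i).2 j hlt h.symm

lemma PA_surj {n : ℕ} (p : Fin n → ℕ) (hp : IsParkingFunction p) (s : ℕ)
    (h1 : 1 ≤ s) (h2 : s ≤ n) : ∃ j, PA p j = s := by
  have himg : Finset.image (PA p) Finset.univ = Finset.Icc 1 n := by
    apply Finset.eq_of_subset_of_card_le
    · intro x hx
      obtain ⟨i, _, rfl⟩ := Finset.mem_image.1 hx
      exact Finset.mem_Icc.2 ⟨le_trans (hp.1 i).1 (PA_mem p i).1, hp.2 i⟩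
    · rw [Finset.card_image_of_injective _ (PA_inj p)]
      simp
  have : s ∈ Finset.image (PA p) Finset.univ := himg ▸ Finset.mem_Icc.2 ⟨h1, h2⟩
  obtain ⟨j, _, hj⟩ := Finset.mem_image.1 this
  exact ⟨j, hj⟩

/-- A car `c` of a parking function `p` is critical if and only if
`c` is a right-to-left maximum in `PA(p)⁻¹`, i.e. every car parked in a space strictly
greater than `q_c` has a smaller car number than `c`. -/
theorem isCritical_iff_rtl_max (n : ℕ) (p : Fin n → ℕ) (hp : IsParkingFunction p)
    (c : Fin n) :
    IsCritical p c ↔ ∀ j : Fin n, PA p c < PA p j → j < c := by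
  constructor
  · intro hcrit j hj
    obtain ⟨j', hj'le, hj'eq⟩ := hcrit (PA p j) hj (hp.2 j)
    have : j' = j := PA_inj p hj'eq
    subst this
    exact lt_of_le_of_ne hj'le (fun h => by subst h; exact lt_irrefl _ hj)
  · intro hmax s hs hsn
    obtain ⟨j, hj⟩ := PA_surj p hp s (by omega) hsn
    exact ⟨j, le_of_lt (hmax j (hj ▸ hs)), hj⟩
end

section
/- For every natural number n ≥ 1, the number of rooted labeled forests on n vertices equals the number of parking functions of length n. -/
/-!  Auxiliary development for Statement 13. -/

namespace Stmt13

open Relation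

attribute [local instance] Classical.propDecidable

variable {n : ℕ}

/-! ### Basic facts about the parking algorithm -/

lemma PA_set_nonempty (p : Fin n → ℕ) (i : Fin n) :
    {s : ℕ | p i ≤ s ∧ ∀ j : Fin n, j < i → PA p j ≠ s}.Nonempty := by
  refine ⟨p i + (∑ j : Fin n, PA p j) + 1, by omega, ?_⟩
  intro j _ h
  have : PA p j ≤ ∑ j : Fin n, PA p j :=
    Finset.single_le_sum (fun _ _ => Nat.zero_le _) (Finset.mem_univ j)
  omega

lemma PA_mem (p : Fin n → ℕ) (i : Fin n) :
    p i ≤ PA p i ∧ ∀ j : Fin n, j < i → PA p j ≠ PA p i := by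
  have := Nat.sInf_mem (PA_set_nonempty p i)
  rw [← PA] at this
  exact this

lemma le_PA (p : Fin n → ℕ) (i : Fin n) : p i ≤ PA p i := (PA_mem p i).1

lemma PA_le_of_mem {p : Fin n → ℕ} {i : Fin n} {s : ℕ} (h1 : p i ≤ s)
    (h2 : ∀ j : Fin n, j < i → PA p j ≠ s) : PA p i ≤ s := by
  have := Nat.sInf_le (show s ∈ {s : ℕ | p i ≤ s ∧ ∀ j : Fin n, j < i → PA p j ≠ s} from ⟨h1, h2⟩)
  rw [← PA] at this
  exact this

lemma PA_min {p : Fin n → ℕ} {i : Fin n} {s : ℕ} (h1 : p i ≤ s) (h2 : s < PA p i) :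
    ∃ j : Fin n, j < i ∧ PA p j = s := by
  by_contra hc
  push_neg at hc
  have := PA_le_of_mem h1 (fun j hj => hc j hj)
  omega

lemma PA_injective (p : Fin n → ℕ) : Function.Injective (PA p) := by
  intro a b hab
  rcases lt_trichotomy a b with h | h | h
  · exact absurd hab ((PA_mem p b).2 a h)
  · exact h
  · exact absurd hab.symm ((PA_mem p a).2 b h)

lemma one_le_PA {p : Fin n → ℕ} (hp : IsParkingFunction p) (i : Fin n) : 1 ≤ PA p i :=
  le_trans (hp.1 i).1 (le_PA p i)

/-- Characterization: a function satisfying the three defining properties equals `PA p`. -/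
lemma PA_eq_char {p q : Fin n → ℕ} (h1 : ∀ i, p i ≤ q i)
    (h2 : Function.Injective q)
    (h3 : ∀ i : Fin n, ∀ s, p i ≤ s → s < q i → ∃ j : Fin n, j < i ∧ q j = s) :
    ∀ i, PA p i = q i := by
  have key : ∀ m : ℕ, ∀ i : Fin n, i.val = m → PA p i = q i := by
    intro m
    induction m using Nat.strong_induction_on with
    | _ m IH =>
      intro i him
      have IH' : ∀ j : Fin n, j < i → PA p j = q j := by
        intro j hj
        have hjv : j.val < m := by rw [← him]; exact hj
        exact IH j.val hjv j rfl
      apply le_antisymm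
      · refine PA_le_of_mem (h1 i) ?_
        intro j hj heq
        rw [IH' j hj] at heq
        exact absurd (h2 heq) (ne_of_lt hj)
      · by_contra hlt
        push_neg at hlt
        obtain ⟨j, hj, hqj⟩ := h3 i (PA p i) (le_PA p i) hlt
        exact (PA_mem p i).2 j hj ((IH' j hj).trans hqj)
  exact fun i => key i.val i rfl

lemma PA_surj {p : Fin n → ℕ} (hp : IsParkingFunction p) :
    ∀ m : ℕ, 1 ≤ m → m ≤ n → ∃ j : Fin n, PA p j = m := by
  have hsub : Finset.image (PA p) Finset.univ ⊆ Finset.Icc 1 n := by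
    intro m hm
    rw [Finset.mem_image] at hm
    obtain ⟨j, -, hj⟩ := hm
    rw [Finset.mem_Icc]
    exact hj ▸ ⟨one_le_PA hp j, hp.2 j⟩
  have hcard : (Finset.Icc 1 n).card ≤ (Finset.image (PA p) Finset.univ).card := by
    rw [Finset.card_image_of_injective _ (PA_injective p), Nat.card_Icc]
    simp
  have heq := Finset.eq_of_subset_of_card_le hsub hcard
  intro m h1 h2
  have : m ∈ Finset.image (PA p) Finset.univ := by
    rw [heq, Finset.mem_Icc]; exact ⟨h1, h2⟩
  rw [Finset.mem_image] at this
  obtain ⟨j, -, hj⟩ := this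
  exact ⟨j, hj⟩

/-! ### The forward map: parking functions to forests -/

/-- Parent function associated to a parking function: the parent of car `i` is the
car parked at space `p i - 1` (none if `p i = 1`). -/
noncomputable def parOf (p : Fin n → ℕ) (i : Fin n) : Option (Fin n) :=
  if h : ∃ j : Fin n, PA p j = p i - 1 then some h.choose else none

lemma parOf_some {p : Fin n → ℕ} (hp : IsParkingFunction p) {i j : Fin n}
    (h : parOf p i = some j) : PA p j = p i - 1 ∧ 2 ≤ p i := by
  unfold parOf at h
  split at h
  · rename_i hex
    injection h with h2
    subst h2
    have h1 := hex.choose_spec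
    have := one_le_PA hp hex.choose
    have := (hp.1 i).1
    exact ⟨h1, by omega⟩
  · exact absurd h (by simp)

lemma parOf_none {p : Fin n → ℕ} (hp : IsParkingFunction p) {i : Fin n}
    (h : parOf p i = none) : p i = 1 := by
  by_contra hne
  have h1 := (hp.1 i).1
  have h2 := (hp.1 i).2
  obtain ⟨j, hj⟩ := PA_surj hp (p i - 1) (by omega) (by omega)
  unfold parOf at h
  rw [dif_pos ⟨j, hj⟩] at h
  exact absurd h (by simp)

lemma isForest_parOf {p : Fin n → ℕ} (hp : IsParkingFunction p) : IsForest (parOf p) := by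
  intro v hv
  have step : ∀ a b : Fin n, parOf p a = some b → PA p b < PA p a := by
    intro a b hab
    obtain ⟨h1, h2⟩ := parOf_some hp hab
    have := le_PA p a
    omega
  have htrans : Transitive (fun a b : Fin n => PA p b < PA p a) :=
    fun a b c h1 h2 => lt_trans h2 h1
  have := (@Relation.transGen_eq_self _ (fun a b : Fin n => PA p b < PA p a) ⟨fun _ _ _ h1 h2 => htrans h1 h2⟩) ▸ (Relation.TransGen.mono step v v hv)
  omega

/-- Candidate predicate: car `i` is not yet parked after spaces `1..s` are filled,
and its parent (if any) is already parked. -/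
def cand (p : Fin n → ℕ) (par : Fin n → Option (Fin n)) (s : ℕ) (i : Fin n) : Prop :=
  s < PA p i ∧ (par i = none ∨ ∃ j : Fin n, par i = some j ∧ PA p j ≤ s)

/-- Key lemma: the car parked at space `s+1` is the smallest candidate at stage `s`. -/
lemma cand_min {p : Fin n → ℕ} (hp : IsParkingFunction p) {c : Fin n} {s : ℕ}
    (hc : PA p c = s + 1) :
    cand p (parOf p) s c ∧ ∀ i : Fin n, cand p (parOf p) s i → c ≤ i := by
  constructor
  · refine ⟨by omega, ?_⟩
    cases hpar : parOf p c with
    | none => exact Or.inl rfl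
    | some j =>
      obtain ⟨h1, h2⟩ := parOf_some hp hpar
      have := le_PA p c
      exact Or.inr ⟨j, rfl, by omega⟩
  · intro i hi
    by_contra hlt
    push_neg at hlt
    have hpi : p i ≤ s + 1 := by
      rcases hi.2 with hnone | ⟨j, hj, hje⟩
      · rw [parOf_none hp hnone]; omega
      · obtain ⟨h1, h2⟩ := parOf_some hp hj
        omega
    have hne : i ≠ c := ne_of_lt hlt
    have hPAi : s + 1 < PA p i := by
      have h1 := hi.1
      rcases Nat.lt_or_ge (s + 1) (PA p i) with h | h
      · exact h
      · have : PA p i = s + 1 := by omega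
        exact absurd (PA_injective p (this.trans hc.symm)) hne
    obtain ⟨j, hj, hje⟩ := PA_min hpi hPAi
    have : j = c := PA_injective p (hje.trans hc.symm)
    subst this
    exact absurd (lt_trans hlt hj) (lt_irrefl i)

/-- The forward map is injective: the forest determines the parking function. -/
lemma parOf_injective {p p' : Fin n → ℕ} (hp : IsParkingFunction p)
    (hp' : IsParkingFunction p') (hpar : parOf p = parOf p') : p = p' := by
  have key : ∀ s : ℕ, ∀ i : Fin n, PA p i = s → PA p' i = s := by
    intro s
    induction s using Nat.strong_induction_on with
    | _ s IH =>
      intro i hi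
      have IH2 : ∀ t, t < s → ∀ x : Fin n, (PA p x = t ↔ PA p' x = t) := by
        intro t ht x
        constructor
        · exact IH t ht x
        · intro hx
          have h1 : 1 ≤ t := hx ▸ one_le_PA hp' x
          have h2 : t ≤ n := hx ▸ hp'.2 x
          obtain ⟨c, hcv⟩ := PA_surj hp t h1 h2
          have := IH t ht c hcv
          have : c = x := PA_injective p' (this.trans hx.symm)
          exact this ▸ hcv
      have hle : ∀ t, t < s → ∀ x : Fin n, (PA p x ≤ t ↔ PA p' x ≤ t) := by
        intro t ht x
        constructor
        · intro hx
          have := (IH2 (PA p x) (by omega) x).mp rfl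
          omega
        · intro hx
          have := (IH2 (PA p' x) (by omega) x).mpr rfl
          omega
      have hs1 : 1 ≤ s := hi ▸ one_le_PA hp i
      have hs2 : s ≤ n := hi ▸ hp.2 i
      obtain ⟨t, rfl⟩ : ∃ t, s = t + 1 := ⟨s - 1, by omega⟩
      have hcandeq : ∀ x : Fin n, cand p (parOf p) t x ↔ cand p' (parOf p') t x := by
        intro x
        unfold cand
        rw [← hpar]
        constructor
        · rintro ⟨hx1, hx2⟩
          refine ⟨by have := (hle t (by omega) x).mpr; omega, ?_⟩
          rcases hx2 with h | ⟨j, hj1, hj2⟩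
          · exact Or.inl h
          · exact Or.inr ⟨j, hj1, (hle t (by omega) j).mp hj2⟩
        · rintro ⟨hx1, hx2⟩
          refine ⟨by have := (hle t (by omega) x).mp; omega, ?_⟩
          rcases hx2 with h | ⟨j, hj1, hj2⟩
          · exact Or.inl h
          · exact Or.inr ⟨j, hj1, (hle t (by omega) j).mpr hj2⟩
      obtain ⟨c', hc'⟩ := PA_surj hp' (t + 1) (by omega) (by omega)
      obtain ⟨hmem, hmin⟩ := cand_min hp hi
      obtain ⟨hmem', hmin'⟩ := cand_min hp' hc'
      have h1 : i ≤ c' := hmin c' ((hcandeq c').mpr hmem')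
      have h2 : c' ≤ i := hmin' i ((hcandeq i).mp hmem)
      have : i = c' := le_antisymm h1 h2
      exact this ▸ hc'
  have hPA : PA p = PA p' := funext fun i => (key (PA p i) i rfl).symm
  funext i
  cases hpi : parOf p i with
  | none =>
    have h1 := parOf_none hp hpi
    have h2 := parOf_none hp' (hpar ▸ hpi)
    omega
  | some j =>
    obtain ⟨h1, h2⟩ := parOf_some hp hpi
    obtain ⟨h1', h2'⟩ := parOf_some hp' (hpar ▸ hpi)
    rw [hPA] at h1
    omega

/-! ### The reverse map: forests to parking functions -/

section Tau

variable (par : Fin n → Option (Fin n)) (hn : 0 < n)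

/-- Greedy placement: `tau par hn s` is the vertex placed at (0-indexed) space `s`,
namely the smallest not-yet-placed vertex whose parent is already placed. -/
noncomputable def tau : ℕ → Fin n
  | s =>
    let placed : Finset (Fin n) :=
      (Finset.range s).attach.image (fun t => tau t.1)
    let C : Finset (Fin n) :=
      Finset.univ.filter (fun i => i ∉ placed ∧ ∀ j : Fin n, par i = some j → j ∈ placed)
    if h : C.Nonempty then C.min' h else ⟨0, hn⟩
termination_by s => s
decreasing_by exact Finset.mem_range.mp t.2

/-- The set of vertices placed before stage `s`. -/
noncomputable def placedF (s : ℕ) : Finset (Fin n) :=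
  (Finset.range s).attach.image (fun t => tau par hn t.1)

/-- The candidate set at stage `s`. -/
noncomputable def candF (s : ℕ) : Finset (Fin n) :=
  Finset.univ.filter
    (fun i => i ∉ placedF par hn s ∧ ∀ j : Fin n, par i = some j → j ∈ placedF par hn s)

lemma tau_eq (s : ℕ) :
    tau par hn s = if h : (candF par hn s).Nonempty then (candF par hn s).min' h
      else ⟨0, hn⟩ := by
  rw [tau]; rfl

lemma mem_placedF {s : ℕ} {x : Fin n} :
    x ∈ placedF par hn s ↔ ∃ t, t < s ∧ tau par hn t = x := by
  unfold placedF
  simp only [Finset.mem_image, Finset.mem_attach, true_and, Subtype.exists]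
  constructor
  · rintro ⟨t, ht, rfl⟩
    exact ⟨t, Finset.mem_range.mp ht, rfl⟩
  · rintro ⟨t, ht, rfl⟩
    exact ⟨t, Finset.mem_range.mpr ht, rfl⟩

lemma candF_nonempty (hF : IsForest par) {s : ℕ} (hs : s < n) :
    (candF par hn s).Nonempty := by
  have hcard : (placedF par hn s).card ≤ s := by
    unfold placedF
    exact le_trans (Finset.card_image_le) (by simp)
  have hex : ∃ v : Fin n, v ∉ placedF par hn s := by
    by_contra hc
    push_neg at hc
    have : Finset.univ ⊆ placedF par hn s := fun v _ => hc v
    have := Finset.card_le_card this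
    simp at this
    omega
  obtain ⟨v, hv⟩ := hex
  have hirr : ∀ w : Fin n, ¬ Relation.TransGen (fun a b : Fin n => par b = some a) w w := by
    intro w hw
    have hw' : Relation.TransGen (Function.swap fun a b : Fin n => par a = some b) w w := hw
    exact hF w (Relation.transGen_swap.mp hw')
  haveI h1 : IsIrrefl (Fin n) (Relation.TransGen (fun a b : Fin n => par b = some a)) := ⟨hirr⟩
  haveI h2 : IsTrans (Fin n) (Relation.TransGen (fun a b : Fin n => par b = some a)) :=
    ⟨fun _ _ _ hab hbc => Relation.TransGen.trans hab hbc⟩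
  have hWF' : WellFounded (Relation.TransGen (fun a b : Fin n => par b = some a)) :=
    @Finite.wellFounded_of_trans_of_irrefl (Fin n) _
      (Relation.TransGen (fun a b : Fin n => par b = some a)) h2 h1
  have hWF : WellFounded (fun a b : Fin n => par b = some a) :=
    @Subrelation.wf (Fin n) (Relation.TransGen (fun a b : Fin n => par b = some a))
      (fun a b : Fin n => par b = some a) (fun h => Relation.TransGen.single h) hWF'
  induction v using hWF.induction with
  | _ v IH =>
    cases hpar : par v with
    | none =>
      exact ⟨v, Finset.mem_filter.mpr ⟨Finset.mem_univ v, hv, fun j hj => by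
        rw [hpar] at hj; exact absurd hj (by simp)⟩⟩
    | some u =>
      by_cases hu : u ∈ placedF par hn s
      · exact ⟨v, Finset.mem_filter.mpr ⟨Finset.mem_univ v, hv, fun j hj => by
          rw [hpar] at hj; injection hj with hj; exact hj ▸ hu⟩⟩
      · exact IH u hpar hu

lemma tau_mem_candF (hF : IsForest par) {s : ℕ} (hs : s < n) :
    tau par hn s ∈ candF par hn s := by
  rw [tau_eq, dif_pos (candF_nonempty par hn hF hs)]
  exact Finset.min'_mem _ _

lemma tau_not_placed (hF : IsForest par) {s : ℕ} (hs : s < n) :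
    tau par hn s ∉ placedF par hn s :=
  (Finset.mem_filter.mp (tau_mem_candF par hn hF hs)).2.1

lemma tau_parent_placed (hF : IsForest par) {s : ℕ} (hs : s < n) {j : Fin n}
    (hj : par (tau par hn s) = some j) : j ∈ placedF par hn s :=
  (Finset.mem_filter.mp (tau_mem_candF par hn hF hs)).2.2 j hj

lemma tau_min (hF : IsForest par) {s : ℕ} (hs : s < n) {i : Fin n}
    (hi : i ∈ candF par hn s) : tau par hn s ≤ i := by
  rw [tau_eq, dif_pos (candF_nonempty par hn hF hs)]
  exact Finset.min'_le _ _ hi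

lemma tau_inj (hF : IsForest par) {t s : ℕ} (ht : t < s) (hs : s < n) :
    tau par hn t ≠ tau par hn s := by
  intro h
  exact tau_not_placed par hn hF hs (mem_placedF par hn |>.mpr ⟨t, ht, h⟩)

lemma tau_surj (hF : IsForest par) (i : Fin n) : ∃ s, s < n ∧ tau par hn s = i := by
  have hinj : Set.InjOn (fun s => tau par hn s) (Finset.range n) := by
    intro a ha b hb hab
    simp only [Finset.coe_range, Set.mem_Iio] at ha hb
    rcases lt_trichotomy a b with h | h | h
    · exact absurd hab (tau_inj par hn hF h hb)
    · exact h
    · exact absurd hab.symm (tau_inj par hn hF h ha)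
  have hcard : (Finset.image (fun s => tau par hn s) (Finset.range n)).card = n := by
    rw [Finset.card_image_of_injOn hinj, Finset.card_range]
  have : Finset.image (fun s => tau par hn s) (Finset.range n) = Finset.univ :=
    Finset.eq_univ_of_card _ (by simp [hcard])
  have : i ∈ Finset.image (fun s => tau par hn s) (Finset.range n) := by
    rw [this]; exact Finset.mem_univ i
  rw [Finset.mem_image] at this
  obtain ⟨s, hs, hsi⟩ := this
  exact ⟨s, Finset.mem_range.mp hs, hsi⟩

end Tau

section Rank

variable (par : Fin n → Option (Fin n)) (hn : 0 < n) (hF : IsForest par)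

/-- The stage at which vertex `i` is placed. -/
noncomputable def rnk (i : Fin n) : ℕ := (tau_surj par hn hF i).choose

lemma rnk_lt (i : Fin n) : rnk par hn hF i < n := (tau_surj par hn hF i).choose_spec.1

lemma tau_rnk (i : Fin n) : tau par hn (rnk par hn hF i) = i :=
  (tau_surj par hn hF i).choose_spec.2

lemma rnk_tau {s : ℕ} (hs : s < n) : rnk par hn hF (tau par hn s) = s := by
  have h1 := tau_rnk par hn hF (tau par hn s)
  have h2 := rnk_lt par hn hF (tau par hn s)
  rcases lt_trichotomy (rnk par hn hF (tau par hn s)) s with h | h | h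
  · exact absurd h1 (tau_inj par hn hF h hs)
  · exact h
  · exact absurd h1.symm (tau_inj par hn hF h h2)

lemma rnk_inj {i j : Fin n} (h : rnk par hn hF i = rnk par hn hF j) : i = j := by
  have := tau_rnk par hn hF i
  rw [h, tau_rnk par hn hF j] at this
  exact this.symm

lemma rnk_parent_lt {i j : Fin n} (hj : par i = some j) :
    rnk par hn hF j < rnk par hn hF i := by
  have h1 : par (tau par hn (rnk par hn hF i)) = some j := by rw [tau_rnk]; exact hj
  have h2 := tau_parent_placed par hn hF (rnk_lt par hn hF i) h1
  rw [mem_placedF] at h2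
  obtain ⟨t, ht, htau⟩ := h2
  have : rnk par hn hF j = t := by rw [← htau, rnk_tau par hn hF (lt_trans ht (rnk_lt par hn hF i))]
  omega

/-- The parking function associated to a forest. -/
noncomputable def pOf (i : Fin n) : ℕ :=
  (par i).elim 1 (fun j => rnk par hn hF j + 2)

lemma PA_pOf (i : Fin n) : PA (pOf par hn hF) i = rnk par hn hF i + 1 := by
  refine PA_eq_char (q := fun x => rnk par hn hF x + 1) ?_ ?_ ?_ i
  · intro x
    unfold pOf
    cases hpar : par x with
    | none => simp
    | some j =>
      simp only [Option.elim]
      have := rnk_parent_lt par hn hF hpar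
      omega
  · intro a b hab
    have hab' : rnk par hn hF a + 1 = rnk par hn hF b + 1 := hab
    exact rnk_inj par hn hF (by omega)
  · intro x s hps hsq
    have hsq' : s < rnk par hn hF x + 1 := hsq
    clear hsq
    have hs1 : 1 ≤ s := by
      have : 1 ≤ pOf par hn hF x := by
        unfold pOf; cases par x <;> simp
      omega
    obtain ⟨t, rfl⟩ : ∃ t, s = t + 1 := ⟨s - 1, by omega⟩
    have htn : t < rnk par hn hF x := by omega
    clear hsq'
    have htn' : t < n := lt_trans htn (rnk_lt par hn hF x)
    refine ⟨tau par hn t, ?_, show rnk par hn hF (tau par hn t) + 1 = t + 1 by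
      rw [rnk_tau par hn hF htn']⟩
    have hxcand : x ∈ candF par hn t := by
      refine Finset.mem_filter.mpr ⟨Finset.mem_univ x, ?_, ?_⟩
      · rw [mem_placedF]
        rintro ⟨u, hu, hux⟩
        have := rnk_tau par hn hF (lt_trans hu htn')
        rw [hux] at this
        omega
      · intro j hj
        rw [mem_placedF]
        have hrj := rnk_parent_lt par hn hF hj
        have hpx : pOf par hn hF x = rnk par hn hF j + 2 := by
          unfold pOf; rw [hj]; rfl
        refine ⟨rnk par hn hF j, by omega, tau_rnk par hn hF j⟩
    have hle := tau_min par hn hF htn' hxcand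
    have hne : tau par hn t ≠ x := by
      intro h
      have := rnk_tau par hn hF htn'
      rw [h] at this
      omega
    exact lt_of_le_of_ne hle hne

lemma isParkingFunction_pOf : IsParkingFunction (pOf par hn hF) := by
  constructor
  · intro i
    constructor
    · unfold pOf; cases par i <;> simp
    · have h1 := PA_pOf par hn hF i
      have h2 := le_PA (pOf par hn hF) i
      have h3 := rnk_lt par hn hF i
      omega
  · intro i
    have h1 := PA_pOf par hn hF i
    have h3 := rnk_lt par hn hF i
    omega

lemma pOf_injective {par' : Fin n → Option (Fin n)} (hF' : IsForest par')
    (h : pOf par hn hF = pOf par' hn hF') : par = par' := by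
  have hrnk : ∀ i, rnk par hn hF i = rnk par' hn hF' i := by
    intro i
    have h1 := PA_pOf par hn hF i
    have h2 := PA_pOf par' hn hF' i
    rw [h] at h1
    omega
  funext i
  cases hpi : par i with
  | none =>
    cases hpi' : par' i with
    | none => rfl
    | some j' =>
      have e1 : pOf par hn hF i = 1 := by unfold pOf; rw [hpi]; rfl
      have e2 : pOf par' hn hF' i = rnk par' hn hF' j' + 2 := by unfold pOf; rw [hpi']; rfl
      rw [h] at e1
      omega
  | some j =>
    cases hpi' : par' i with
    | none =>
      have e1 : pOf par hn hF i = rnk par hn hF j + 2 := by unfold pOf; rw [hpi]; rfl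
      have e2 : pOf par' hn hF' i = 1 := by unfold pOf; rw [hpi']; rfl
      rw [h] at e1
      omega
    | some j' =>
      have e1 : pOf par hn hF i = rnk par hn hF j + 2 := by unfold pOf; rw [hpi]; rfl
      have e2 : pOf par' hn hF' i = rnk par' hn hF' j' + 2 := by unfold pOf; rw [hpi']; rfl
      rw [h, e2] at e1
      have : rnk par' hn hF' j = rnk par' hn hF' j' := by rw [← hrnk]; omega
      congr 1
      exact rnk_inj par' hn hF' this
  
end Rank

end Stmt13



/-- The number of rooted labeled forests on `n` vertices equals the
number of parking functions of length `n`. -/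
theorem card_forest_eq_card_parkingFunction (n : ℕ) (hn : 1 ≤ n) :
    Nat.card (Forest n) = Nat.card (ParkingFunction n) := by
  haveI : Finite {p : Fin n → ℕ // IsParkingFunction p} :=
    inferInstanceAs (Finite (ParkingFunction n))
  haveI : Finite {par : Fin n → Option (Fin n) // IsForest par} :=
    inferInstanceAs (Finite (Forest n))
  have h1 : Nat.card (ParkingFunction n) ≤ Nat.card (Forest n) := by
    apply Nat.card_le_card_of_injective
      (fun P : ParkingFunction n => (⟨Stmt13.parOf P.1, Stmt13.isForest_parOf P.2⟩ : Forest n))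
    intro P Q h
    exact Subtype.ext (Stmt13.parOf_injective P.2 Q.2 (congrArg Subtype.val h))
  have h2 : Nat.card (Forest n) ≤ Nat.card (ParkingFunction n) := by
    apply Nat.card_le_card_of_injective
      (fun F : Forest n =>
        (⟨Stmt13.pOf F.1 hn F.2, Stmt13.isParkingFunction_pOf F.1 hn F.2⟩ : ParkingFunction n))
    intro F G h
    exact Subtype.ext (Stmt13.pOf_injective F.1 hn F.2 G.2 (congrArg Subtype.val h))
  omega
end
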